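/- arXiv:0812.2386 — 5 statements merged into one kernel-verified Lean document; each statement's English description precedes it below -/
import Mathlib

section
/- (Gale–Ryser) Let d = (d_1, …, d_m) and d' = (d'_1, …, d'_n) be lists of non-negative integers with d_1 ≥ … ≥ d_m, d'_1 ≥ … ≥ d'_n, and ∑_{i=1}^m d_i = ∑_{j=1}^n d'_j. Then there exists a simple bipartite graph on vertex parts A = {a_1,…,a_m} and B = {b_1,…,b_n} (all edges joining A to B) in which a_i has degree d_i for each i and b_j has degree d'_j for each j, if and only if for every s with 1 ≤ s ≤ n one has ∑_{i=1}^m min{d_i, s} ≥ ∑_{j=1}^s d'_j. -/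
open Finset

namespace GaleRyserAux

variable {m n : ℕ}

/-- prefix sum of the first `s` entries -/
def P (c : Fin n → ℕ) (s : ℕ) : ℕ := ∑ j ∈ univ.filter (fun j : Fin n => (j : ℕ) < s), c j

lemma card_fin_lt (n t : ℕ) : (univ.filter fun j : Fin n => (j : ℕ) < t).card = min t n := by
  have h : (univ.filter fun j : Fin n => (j : ℕ) < t).map Fin.valEmbedding
      = (Iio n).filter (· < t) := by
    rw [← Fin.map_valEmbedding_univ, filter_map]; rfl
  have h2 := congrArg Finset.card h
  rw [card_map] at h2
  rw [h2]
  have : (Iio n).filter (· < t) = Iio (min t n) := by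
    ext x; simp [lt_min_iff, and_comm]
  rw [this]
  simp

lemma P_zero (c : Fin n → ℕ) : P c 0 = 0 := by
  simp [P]

lemma P_succ (c : Fin n → ℕ) {s : ℕ} (hs : s < n) : P c (s + 1) = P c s + c ⟨s, hs⟩ := by
  have : (univ.filter fun j : Fin n => (j : ℕ) < s + 1)
      = insert ⟨s, hs⟩ (univ.filter fun j : Fin n => (j : ℕ) < s) := by
    ext t
    simp only [mem_filter, mem_univ, true_and, mem_insert]
    constructor
    · intro ht
      rcases Nat.lt_succ_iff_lt_or_eq.mp ht with h | h
      · exact Or.inr h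
      · exact Or.inl (Fin.ext h)
    · rintro (rfl | h)
      · exact Nat.lt_succ_self s
      · exact Nat.lt_succ_of_lt h
  rw [P, this, sum_insert (by simp), P, add_comm]

lemma P_of_le (c : Fin n → ℕ) {s : ℕ} (hs : n ≤ s) : P c s = ∑ j, c j := by
  have : (univ.filter fun j : Fin n => (j : ℕ) < s) = univ := by
    apply filter_true_of_mem
    intro j _
    exact lt_of_lt_of_le j.isLt hs
  rw [P, this]

/-- realizability of a 0/1 matrix with given row sums `d` and column sums `c` -/
def Realizable (d : Fin m → ℕ) (c : Fin n → ℕ) : Prop :=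
  ∃ M : Fin m → Fin n → ℕ, (∀ i j, M i j ≤ 1) ∧ (∀ i, ∑ j, M i j = d i) ∧
    (∀ j, ∑ i, M i j = c j)

lemma exists_row (M : Fin m → Fin n → ℕ) {j k : Fin n}
    (h : ∑ i, M i k < ∑ i, M i j) (hM : ∀ i j, M i j ≤ 1) :
    ∃ i, M i j = 1 ∧ M i k = 0 := by
  by_contra hc
  push_neg at hc
  have : ∀ i, M i j ≤ M i k := by
    intro i
    have h1 := hM i j
    have h2 := hM i k
    by_cases hij : M i j = 1
    · have := hc i hij
      omega
    · omega
  exact absurd (Finset.sum_le_sum fun i _ => this i) (not_le.mpr h)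

lemma transfer {d : Fin m → ℕ} {c : Fin n → ℕ} {j k : Fin n} (hjk : j ≠ k)
    (hre : Realizable d c) (hlt : c k < c j) :
    Realizable d (Function.update (Function.update c j (c j - 1)) k (c k + 1)) := by
  obtain ⟨M, hM1, hMr, hMc⟩ := hre
  obtain ⟨i, hij, hik⟩ := exists_row M (j := j) (k := k) (by rw [hMc, hMc]; exact hlt) hM1
  refine ⟨Function.update M i (Function.update (Function.update (M i) j 0) k 1), ?_, ?_, ?_⟩
  · intro i' j'
    rcases eq_or_ne i' i with rfl | hi
    · rw [Function.update_self]
      rcases eq_or_ne j' k with rfl | hk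
      · simp
      · rw [Function.update_of_ne hk]
        rcases eq_or_ne j' j with rfl | hj
        · simp
        · rw [Function.update_of_ne hj]; exact hM1 i' j'
    · rw [Function.update_of_ne hi]; exact hM1 i' j'
  · intro i'
    rcases eq_or_ne i' i with rfl | hi
    · rw [Function.update_self]
      rw [Finset.sum_update_of_mem (mem_univ k)]
      rw [Finset.sum_update_of_mem (by simp [hjk] : j ∈ univ \ {k})]
      have hold : ∑ j', M i' j' = M i' k + (M i' j + ∑ x ∈ (univ \ {k}) \ {j}, M i' x) := by
        rw [← Finset.sum_update_of_mem (by simp [hjk] : j ∈ univ \ {k}) (M i') (M i' j)]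
        rw [← Finset.sum_update_of_mem (mem_univ k) _ (M i' k)]
        congr 1
        ext x
        rcases eq_or_ne x k with rfl | hk
        · simp
        · rw [Function.update_of_ne hk]
          rcases eq_or_ne x j with rfl | hj
          · simp
          · simp [hj]
      rw [← hMr i', hold, hij, hik]
      omega
    · rw [Function.update_of_ne hi]; exact hMr i'
  · intro j'
    rcases eq_or_ne j' k with rfl | hk
    · rw [Function.update_self]
      have : (fun i' => Function.update M i (Function.update (Function.update (M i) j 0) j' 1) i' j')
          = Function.update (fun i' => M i' j') i 1 := by
        funext i'
        rcases eq_or_ne i' i with rfl | hi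
        · simp
        · simp [Function.update_of_ne hi]
      rw [this, Finset.sum_update_of_mem (mem_univ i)]
      have : c j' = M i j' + ∑ x ∈ univ \ {i}, M x j' := by
        rw [← hMc j', ← Finset.sum_update_of_mem (mem_univ i) (fun i' => M i' j') (M i j')]
        apply Finset.sum_congr rfl
        intro x _
        rcases eq_or_ne x i with rfl | hx
        · simp
        · simp [hx]
      omega
    · rw [Function.update_of_ne hk]
      rcases eq_or_ne j' j with rfl | hj
      · rw [Function.update_self]
        have : (fun i' => Function.update M i (Function.update (Function.update (M i) j' 0) k 1) i' j')
            = Function.update (fun i' => M i' j') i 0 := by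
          funext i'
          rcases eq_or_ne i' i with rfl | hi
          · simp [Function.update_of_ne hjk]
          · simp [Function.update_of_ne hi]
        rw [this, Finset.sum_update_of_mem (mem_univ i)]
        have : c j' = M i j' + ∑ x ∈ univ \ {i}, M x j' := by
          rw [← hMc j', ← Finset.sum_update_of_mem (mem_univ i) (fun i' => M i' j') (M i j')]
          apply Finset.sum_congr rfl
          intro x _
          rcases eq_or_ne x i with rfl | hx
          · simp
          · simp [hx]
        omega
      · rw [Function.update_of_ne hj, ← hMc j']
        apply Finset.sum_congr rfl
        intro i' _
        rcases eq_or_ne i' i with rfl | hi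
        · simp [Function.update_of_ne hk, Function.update_of_ne hj]
        · simp [Function.update_of_ne hi]


lemma cpp_val {c : Fin n → ℕ} {j k : Fin n} (hjk : j ≠ k) :
    (Function.update (Function.update c j (c j - 1)) k (c k + 1)) j = c j - 1 ∧
    (Function.update (Function.update c j (c j - 1)) k (c k + 1)) k = c k + 1 ∧
    ∀ t, t ≠ j → t ≠ k →
      (Function.update (Function.update c j (c j - 1)) k (c k + 1)) t = c t := by
  refine ⟨?_, ?_, ?_⟩
  · rw [Function.update_of_ne hjk, Function.update_self]
  · rw [Function.update_self]
  · intro t ht1 ht2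
    rw [Function.update_of_ne ht2, Function.update_of_ne ht1]

lemma step {d : Fin m → ℕ} {c d' : Fin n → ℕ} (hd' : Antitone d')
    (hdom : ∀ s ≤ n, P d' s ≤ P c s) (htot : ∑ j, c j = ∑ j, d' j)
    (hne : c ≠ d') (hre : Realizable d c) :
    ∃ c'' : Fin n → ℕ, Realizable d c'' ∧ (∀ s ≤ n, P d' s ≤ P c'' s) ∧
      (∑ j, c'' j = ∑ j, d' j) ∧
      (∑ s ∈ range (n + 1), (P c'' s - P d' s)) <
        (∑ s ∈ range (n + 1), (P c s - P d' s)) := by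
  classical
  -- the first index where c and d' differ
  have hjne : (univ.filter fun t : Fin n => c t ≠ d' t).Nonempty := by
    by_contra h
    rw [Finset.not_nonempty_iff_eq_empty, Finset.filter_eq_empty_iff] at h
    exact hne (funext fun t => not_ne_iff.mp (h (mem_univ t)))
  set j := (univ.filter fun t : Fin n => c t ≠ d' t).min' hjne with hjdef
  have hjmem : c j ≠ d' j := by
    have := Finset.min'_mem _ hjne
    rw [mem_filter] at this
    exact this.2
  have hjmin : ∀ t : Fin n, t < j → c t = d' t := by
    intro t ht
    by_contra h
    exact absurd (Finset.min'_le _ t (by simp [h])) (not_le.mpr ht)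
  -- prefix sums agree up to j
  have hPj : P d' (j : ℕ) = P c (j : ℕ) := by
    apply Finset.sum_congr rfl
    intro t ht
    rw [mem_filter] at ht
    exact (hjmin t (Fin.lt_def.mpr ht.2)).symm
  have hcj : d' j + 1 ≤ c j := by
    have h1 := hdom ((j : ℕ) + 1) j.isLt
    rw [P_succ d' j.isLt, P_succ c j.isLt, hPj] at h1
    simp only [Fin.eta] at h1
    omega
  -- first index k > j with c k < d' k
  have hkne : (univ.filter fun t : Fin n => j < t ∧ c t < d' t).Nonempty := by
    by_contra h
    rw [Finset.not_nonempty_iff_eq_empty, Finset.filter_eq_empty_iff] at h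
    have hge : ∀ t : Fin n, d' t ≤ c t := by
      intro t
      rcases lt_trichotomy t j with h1 | rfl | h1
      · exact (hjmin t h1).ge
      · omega
      · have := h (mem_univ t)
        push_neg at this
        exact this h1
    have : ∑ t, d' t < ∑ t, c t :=
      Finset.sum_lt_sum (fun t _ => hge t) ⟨j, mem_univ j, by omega⟩
    omega
  set k := (univ.filter fun t : Fin n => j < t ∧ c t < d' t).min' hkne with hkdef
  have hkmem : j < k ∧ c k < d' k := by
    have := Finset.min'_mem _ hkne
    rw [mem_filter] at this
    exact this.2
  have hkmin : ∀ t : Fin n, j < t → t < k → d' t ≤ c t := by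
    intro t ht1 ht2
    by_contra h
    exact absurd (Finset.min'_le _ t (by simp [ht1, not_le.mp h])) (not_le.mpr ht2)
  have hjk : j ≠ k := ne_of_lt hkmem.1
  have hjkv : (j : ℕ) < (k : ℕ) := hkmem.1
  have hck : c k + 2 ≤ c j := by
    have := hd' (le_of_lt hkmem.1)
    omega
  set c'' := Function.update (Function.update c j (c j - 1)) k (c k + 1) with hc''
  have hvj : c'' j = c j - 1 := (cpp_val hjk).1
  have hvk : c'' k = c k + 1 := (cpp_val hjk).2.1
  have hvo : ∀ t, t ≠ j → t ≠ k → c'' t = c t := (cpp_val hjk).2.2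
  -- prefix sums of c''
  have hA : ∀ s ≤ (j : ℕ), P c'' s = P c s := by
    intro s hs
    apply Finset.sum_congr rfl
    intro t ht
    rw [mem_filter] at ht
    have h1 : (t : ℕ) < (j : ℕ) := lt_of_lt_of_le ht.2 hs
    exact hvo t (by intro h; rw [h] at h1; omega)
      (by intro h; rw [h] at h1; omega)
  have hB : ∀ s, (j : ℕ) < s → s ≤ (k : ℕ) → P c s = P c'' s + 1 := by
    intro s hs1 hs2
    have hjm : j ∈ univ.filter fun t : Fin n => (t : ℕ) < s := by simp [hs1]
    have hkm : k ∉ univ.filter fun t : Fin n => (t : ℕ) < s := by simp; omega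
    rw [P, P, ← Finset.add_sum_erase _ c hjm, ← Finset.add_sum_erase _ c'' hjm]
    have : ∑ x ∈ (univ.filter fun t : Fin n => (t : ℕ) < s).erase j, c'' x
        = ∑ x ∈ (univ.filter fun t : Fin n => (t : ℕ) < s).erase j, c x := by
      apply Finset.sum_congr rfl
      intro x hx
      rw [mem_erase] at hx
      exact hvo x hx.1 (by rintro rfl; exact hkm hx.2)
    rw [this, hvj]
    omega
  have hC : ∀ s, (k : ℕ) < s → P c'' s = P c s := by
    intro s hs
    have hjm : j ∈ univ.filter fun t : Fin n => (t : ℕ) < s := by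
      simp only [mem_filter, mem_univ, true_and]; omega
    have hkm : k ∈ (univ.filter fun t : Fin n => (t : ℕ) < s).erase j := by
      rw [mem_erase]
      refine ⟨(Ne.symm hjk), by simp only [mem_filter, mem_univ, true_and]; omega⟩
    rw [P, P, ← Finset.add_sum_erase _ c hjm, ← Finset.add_sum_erase _ c'' hjm,
      ← Finset.add_sum_erase _ c hkm, ← Finset.add_sum_erase _ c'' hkm]
    have : ∑ x ∈ ((univ.filter fun t : Fin n => (t : ℕ) < s).erase j).erase k, c'' x
        = ∑ x ∈ ((univ.filter fun t : Fin n => (t : ℕ) < s).erase j).erase k, c x := by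
      apply Finset.sum_congr rfl
      intro x hx
      rw [mem_erase, mem_erase] at hx
      exact hvo x hx.2.1 hx.1
    rw [this, hvj, hvk]
    omega
  -- middle dominance claim
  have hM : ∀ s, (j : ℕ) + 1 ≤ s → s ≤ (k : ℕ) → P d' s + 1 ≤ P c s := by
    intro s hs
    induction s, hs using Nat.le_induction with
    | base =>
      intro _
      rw [P_succ d' j.isLt, P_succ c j.isLt, hPj]
      simp only [Fin.eta]
      omega
    | succ s hjs ih =>
      intro hsk
      have hsn : s < n := lt_of_lt_of_le (by omega) (le_of_lt k.isLt)
      have hent : d' ⟨s, hsn⟩ ≤ c ⟨s, hsn⟩ :=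
        hkmin ⟨s, hsn⟩ (by rw [Fin.lt_def]; simpa using by omega)
          (by rw [Fin.lt_def]; simpa using by omega)
      rw [P_succ d' hsn, P_succ c hsn]
      have := ih (by omega)
      omega
  have hle : ∀ s, P c'' s ≤ P c s := by
    intro s
    rcases le_or_gt s (j : ℕ) with h | h
    · rw [hA s h]
    · rcases le_or_gt s (k : ℕ) with h2 | h2
      · have := hB s h h2; omega
      · rw [hC s h2]
  refine ⟨c'', transfer hjk hre (by omega), ?_, ?_, ?_⟩
  · intro s hs
    rcases le_or_gt s (j : ℕ) with h | h
    · rw [hA s h]; exact hdom s hs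
    · rcases le_or_gt s (k : ℕ) with h2 | h2
      · have h3 := hB s h h2
        have h4 := hM s (by omega) h2
        omega
      · rw [hC s h2]; exact hdom s hs
  · rw [← P_of_le c'' (le_refl n), ← P_of_le d' (le_refl n), hC n k.isLt,
      P_of_le c (le_refl n), P_of_le d' (le_refl n), htot]
  · apply Finset.sum_lt_sum
    · intro s _
      have := hle s
      omega
    · refine ⟨(k : ℕ), by simp [Nat.lt_succ_of_lt k.isLt], ?_⟩
      have h3 := hB (k : ℕ) hjkv (le_refl _)
      have h4 := hM (k : ℕ) (by omega) (le_refl _)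
      omega


lemma realize_of_dom {d : Fin m → ℕ} {d' : Fin n → ℕ} (hd' : Antitone d') :
    ∀ (N : ℕ) (c : Fin n → ℕ),
      (∑ s ∈ range (n + 1), (P c s - P d' s)) ≤ N →
      Realizable d c → (∀ s ≤ n, P d' s ≤ P c s) → (∑ j, c j = ∑ j, d' j) →
      Realizable d d' := by
  intro N
  induction N with
  | zero =>
    intro c hN hre hdom htot
    by_cases hc : c = d'
    · rwa [hc] at hre
    · obtain ⟨c'', _, _, _, hlt⟩ := step hd' hdom htot hc hre
      omega
  | succ N ih =>
    intro c hN hre hdom htot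
    by_cases hc : c = d'
    · rwa [hc] at hre
    · obtain ⟨c'', hre'', hdom'', htot'', hlt⟩ := step hd' hdom htot hc hre
      exact ih c'' (by omega) hre'' hdom'' htot''

lemma sum_eq_card_filter_eq_one (f : Fin n → ℕ) (hf : ∀ j, f j ≤ 1) :
    ∑ j, f j = (univ.filter fun j => f j = 1).card := by
  rw [card_filter]
  apply Finset.sum_congr rfl
  intro j _
  have := hf j
  split_ifs with h <;> omega

lemma base_realizable (d : Fin m → ℕ) (hdn : ∀ i, d i ≤ n) :
    ∃ c : Fin n → ℕ, Realizable d c ∧ (∀ s ≤ n, P c s = ∑ i, min (d i) s) := by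
  refine ⟨fun j => ∑ i, if (j : ℕ) < d i then 1 else 0,
    ⟨fun i j => if (j : ℕ) < d i then 1 else 0, ?_, ?_, fun j => rfl⟩, ?_⟩
  · intro i j; simp only []; split_ifs <;> omega
  · intro i
    rw [← card_filter, card_fin_lt]
    exact min_eq_left (hdn i)
  · intro s hs
    rw [P, Finset.sum_comm]
    apply Finset.sum_congr rfl
    intro i _
    rw [Finset.sum_filter]
    have h1 : ∀ j : Fin n, (if (j : ℕ) < s then if (j : ℕ) < d i then 1 else 0 else 0)
        = if (j : ℕ) < min s (d i) then 1 else 0 := by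
      intro j; split_ifs <;> omega
    rw [Finset.sum_congr rfl fun j _ => h1 j, ← card_filter, card_fin_lt]
    have := hdn i
    omega

def mkGraph (M : Fin m → Fin n → ℕ) : SimpleGraph (Fin m ⊕ Fin n) where
  Adj u v := match u, v with
    | Sum.inl i, Sum.inr j => M i j = 1
    | Sum.inr j, Sum.inl i => M i j = 1
    | _, _ => False
  symm := by constructor; rintro (i | j) (i' | j') h <;> first | exact h | exact h.elim
  loopless := by constructor; rintro (i | j) h <;> exact h

instance mkGraphDec (M : Fin m → Fin n → ℕ) : DecidableRel (mkGraph M).Adj := fun u v =>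
  match u, v with
  | Sum.inl i, Sum.inr j => inferInstanceAs (Decidable (M i j = 1))
  | Sum.inr j, Sum.inl i => inferInstanceAs (Decidable (M i j = 1))
  | Sum.inl _, Sum.inl _ => inferInstanceAs (Decidable False)
  | Sum.inr _, Sum.inr _ => inferInstanceAs (Decidable False)

lemma degree_inl (G : SimpleGraph (Fin m ⊕ Fin n)) (hdec : DecidableRel G.Adj)
    (hcross : ∀ u v, G.Adj u v → u.isLeft ≠ v.isLeft) (i : Fin m) :
    G.degree (Sum.inl i) = (univ.filter fun j => G.Adj (Sum.inl i) (Sum.inr j)).card := by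
  have h : G.neighborFinset (Sum.inl i)
      = (univ.filter fun j => G.Adj (Sum.inl i) (Sum.inr j)).map
        ⟨Sum.inr, Sum.inr_injective⟩ := by
    ext v
    rcases v with i' | j
    · simp only [SimpleGraph.mem_neighborFinset, mem_map, mem_filter, mem_univ, true_and,
        Function.Embedding.coeFn_mk]
      constructor
      · intro hadj
        exact absurd (hcross _ _ hadj) (by simp)
      · rintro ⟨j, -, hj⟩
        exact absurd hj (by simp)
    · simp only [SimpleGraph.mem_neighborFinset, mem_map, mem_filter, mem_univ, true_and,
        Function.Embedding.coeFn_mk]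
      constructor
      · intro hadj; exact ⟨j, hadj, rfl⟩
      · rintro ⟨j', hj', hjj⟩
        rcases Sum.inr_injective hjj with rfl
        exact hj'
  show (G.neighborFinset (Sum.inl i)).card = _
  rw [h, card_map]

lemma degree_inr (G : SimpleGraph (Fin m ⊕ Fin n)) (hdec : DecidableRel G.Adj)
    (hcross : ∀ u v, G.Adj u v → u.isLeft ≠ v.isLeft) (j : Fin n) :
    G.degree (Sum.inr j) = (univ.filter fun i => G.Adj (Sum.inl i) (Sum.inr j)).card := by
  have h : G.neighborFinset (Sum.inr j)
      = (univ.filter fun i => G.Adj (Sum.inl i) (Sum.inr j)).map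
        ⟨Sum.inl, Sum.inl_injective⟩ := by
    ext v
    rcases v with i | j'
    · simp only [SimpleGraph.mem_neighborFinset, mem_map, mem_filter, mem_univ, true_and,
        Function.Embedding.coeFn_mk]
      constructor
      · intro hadj; exact ⟨i, hadj.symm, rfl⟩
      · rintro ⟨i', hi', hii⟩
        rcases Sum.inl_injective hii with rfl
        exact hi'.symm
    · simp only [SimpleGraph.mem_neighborFinset, mem_map, mem_filter, mem_univ, true_and,
        Function.Embedding.coeFn_mk]
      constructor
      · intro hadj
        exact absurd (hcross _ _ hadj) (by simp)
      · rintro ⟨i, -, hi⟩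
        exact absurd hi (by simp)
  show (G.neighborFinset (Sum.inr j)).card = _
  rw [h, card_map]

end GaleRyserAux


/-- **Gale–Ryser theorem.** Given antitone lists `d : Fin m → ℕ` and `d' : Fin n → ℕ`
with equal sums, there is a simple bipartite graph on parts `Fin m` and `Fin n`
(all edges joining the two parts) whose degree sequences on the two sides are `d`
and `d'` respectively, if and only if for every `1 ≤ s ≤ n` one has
`∑_{j < s} d'_j ≤ ∑ i, min (d i) s`. -/
theorem gale_ryser (m n : ℕ) (d : Fin m → ℕ) (d' : Fin n → ℕ)
    (hd : Antitone d) (hd' : Antitone d')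
    (hsum : ∑ i, d i = ∑ j, d' j) :
    (∃ (G : SimpleGraph (Fin m ⊕ Fin n)) (_ : DecidableRel G.Adj),
        (∀ u v, G.Adj u v → u.isLeft ≠ v.isLeft) ∧
        (∀ i : Fin m, G.degree (Sum.inl i) = d i) ∧
        (∀ j : Fin n, G.degree (Sum.inr j) = d' j)) ↔
      (∀ s : ℕ, 1 ≤ s → s ≤ n →
        ∑ j ∈ univ.filter (fun j : Fin n => (j : ℕ) < s), d' j ≤ ∑ i, min (d i) s) := by
  classical
  constructor
  · rintro ⟨G, hdec, hcross, hdl, hdr⟩ s hs1 hs2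
    have hrow : ∀ i, ∑ j, (if G.Adj (Sum.inl i) (Sum.inr j) then 1 else 0) = d i := by
      intro i
      rw [← card_filter, ← GaleRyserAux.degree_inl G hdec hcross i]
      exact hdl i
    have hcol : ∀ j, ∑ i, (if G.Adj (Sum.inl i) (Sum.inr j) then 1 else 0) = d' j := by
      intro j
      rw [← card_filter, ← GaleRyserAux.degree_inr G hdec hcross j]
      exact hdr j
    calc ∑ j ∈ univ.filter (fun j : Fin n => (j : ℕ) < s), d' j
        = ∑ j ∈ univ.filter (fun j : Fin n => (j : ℕ) < s), ∑ i,
            (if G.Adj (Sum.inl i) (Sum.inr j) then 1 else 0) :=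
          Finset.sum_congr rfl fun j _ => (hcol j).symm
      _ = ∑ i, ∑ j ∈ univ.filter (fun j : Fin n => (j : ℕ) < s),
            (if G.Adj (Sum.inl i) (Sum.inr j) then 1 else 0) := Finset.sum_comm
      _ ≤ ∑ i, min (d i) s := by
          apply Finset.sum_le_sum
          intro i _
          apply le_min
          · rw [← hrow i]
            exact Finset.sum_le_sum_of_subset (filter_subset _ _)
          · calc ∑ j ∈ univ.filter (fun j : Fin n => (j : ℕ) < s),
                  (if G.Adj (Sum.inl i) (Sum.inr j) then 1 else 0)
                ≤ ∑ _j ∈ univ.filter (fun j : Fin n => (j : ℕ) < s), 1 :=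
                  Finset.sum_le_sum fun j _ => by split_ifs <;> omega
              _ = min s n := by
                  rw [Finset.sum_const, smul_eq_mul, mul_one, GaleRyserAux.card_fin_lt]
              _ ≤ s := min_le_left _ _
  · intro h
    have hdn : ∀ i, d i ≤ n := by
      rcases Nat.eq_zero_or_pos n with rfl | hn
      · intro i
        have h0 : ∑ i, d i = 0 := by rw [hsum]; simp
        have := (Finset.sum_eq_zero_iff).mp h0 i (mem_univ i)
        omega
      · have h1 := h n hn (le_refl n)
        have h2 : (univ.filter fun j : Fin n => (j : ℕ) < n) = univ :=
          filter_true_of_mem fun j _ => j.isLt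
        rw [h2, ← hsum] at h1
        have h3 : ∀ i ∈ (univ : Finset (Fin m)), min (d i) n ≤ d i := fun i _ => min_le_left _ _
        have h4 := (Finset.sum_eq_sum_iff_of_le h3).mp
          (le_antisymm (Finset.sum_le_sum h3) h1)
        intro i
        have := h4 i (mem_univ i)
        omega
    obtain ⟨c0, hre0, hP0⟩ := GaleRyserAux.base_realizable d hdn
    have hdom : ∀ s ≤ n, GaleRyserAux.P d' s ≤ GaleRyserAux.P c0 s := by
      intro s hsn
      rcases Nat.eq_zero_or_pos s with rfl | hs1
      · simp [GaleRyserAux.P_zero]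
      · rw [hP0 s hsn]
        exact h s hs1 hsn
    have htot0 : ∑ j, c0 j = ∑ j, d' j := by
      rw [← GaleRyserAux.P_of_le c0 (le_refl n), hP0 n (le_refl n), ← hsum]
      exact Finset.sum_congr rfl fun i _ => min_eq_left (hdn i)
    obtain ⟨M, hM1, hMr, hMc⟩ :=
      GaleRyserAux.realize_of_dom hd' _ c0 le_rfl hre0 hdom htot0
    refine ⟨GaleRyserAux.mkGraph M, GaleRyserAux.mkGraphDec M, ?_, ?_, ?_⟩
    · rintro (i | j) (i' | j') hadj
      · exact hadj.elim
      · simp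
      · simp
      · exact hadj.elim
    · intro i
      rw [GaleRyserAux.degree_inl _ (GaleRyserAux.mkGraphDec M)
        (by rintro (i | j) (i' | j') hadj
            · exact hadj.elim
            · simp
            · simp
            · exact hadj.elim) i]
      rw [← hMr i, GaleRyserAux.sum_eq_card_filter_eq_one (M i) (hM1 i)]
      congr 1
    · intro j
      rw [GaleRyserAux.degree_inr _ (GaleRyserAux.mkGraphDec M)
        (by rintro (i | j') (i' | j'') hadj
            · exact hadj.elim
            · simp
            · simp
            · exact hadj.elim) j]
      rw [← hMc j, GaleRyserAux.sum_eq_card_filter_eq_one (fun i => M i j) (fun i => hM1 i j)]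
      congr 1
end

section
/- Let a ≥ 1 be a real number and let d = (d_1, …, d_m) be a list of non-negative integers with d_1 ≥ … ≥ d_m. If d_1 ≤ a·d_m and d_1 ≤ 4am/(a+1)², then there exists a simple bipartite graph on parts A = {a_1,…,a_m} and B = {b_1,…,b_m} (all edges joining A to B) in which a_i has degree d_i and b_i has degree d_i for every 1 ≤ i ≤ m. -/
lemma exists_top (m : ℕ) (c : Fin m → ℕ) (q : ℕ) (hq : q ≤ m) :
    ∃ S : Finset (Fin m), S.card = q ∧ ∀ i ∈ S, ∀ j ∉ S, c j ≤ c i := by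
  induction q with
  | zero => exact ⟨∅, rfl, by simp⟩
  | succ q ih =>
    obtain ⟨S, hcard, hS⟩ := ih (Nat.le_of_succ_le hq)
    have hne : Sᶜ.Nonempty := by
      rw [← Finset.card_pos, Finset.card_compl, hcard, Fintype.card_fin]
      omega
    obtain ⟨j₀, hj₀, hmax⟩ := Finset.exists_max_image Sᶜ c hne
    refine ⟨insert j₀ S, ?_, ?_⟩
    · rw [Finset.card_insert_of_notMem (by simpa using hj₀), hcard]
    · intro i hi j hj
      have hjS : j ∉ S := fun h => hj (Finset.mem_insert_of_mem h)
      rcases Finset.mem_insert.mp hi with rfl | hiS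
      · exact hmax j (Finset.mem_compl.mpr hjS)
      · exact hS i hiS j hjS

lemma gr_core (m : ℕ) : ∀ (n : ℕ) (r : Fin n → ℕ) (c : Fin m → ℕ),
    Antitone r → (∑ i, r i = ∑ j, c j) →
    (∀ k : ℕ, (∑ i : Fin n, if (i : ℕ) < k then r i else 0) ≤ ∑ j, min (c j) k) →
    ∃ M : Fin n → Fin m → Bool,
      (∀ i, (∑ j, if M i j then 1 else 0) = r i) ∧
      (∀ j, (∑ i, if M i j then 1 else 0) = c j) := by
  intro n
  induction n with
  | zero =>
    intro r c _ hsum _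
    refine ⟨Fin.elim0, fun i => i.elim0, fun j => ?_⟩
    have h0 : ∑ j, c j = 0 := by simpa using hsum.symm
    have := (Finset.sum_eq_zero_iff.mp h0) j (Finset.mem_univ j)
    simp [this]
  | succ n ih =>
    intro r c hr hsum hcond
    set q := r 0 with hqdef
    have hr0 : (∑ i : Fin (n+1), if (i:ℕ) < 1 then r i else 0) = r 0 := by
      rw [Fin.sum_univ_succ]; simp
    have hmin1 : ∀ x : ℕ, min x 1 = if 1 ≤ x then 1 else 0 := by
      intro x
      rcases le_or_gt 1 x with h | h
      · rw [if_pos h]; omega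
      · rw [if_neg (by omega)]; omega
    have hsum1 : ∑ j, min (c j) 1 = (Finset.univ.filter (fun j => 1 ≤ c j)).card := by
      rw [Finset.card_filter]
      exact Finset.sum_congr rfl (fun j _ => hmin1 (c j))
    have hqm : q ≤ m := by
      have h := hcond 1
      rw [hr0] at h
      calc q ≤ ∑ j, min (c j) 1 := h
        _ ≤ ∑ _j : Fin m, 1 := Finset.sum_le_sum (fun j _ => min_le_right _ _)
        _ = m := by simp
    obtain ⟨S, hScard, hStop⟩ := exists_top m c q hqm
    have hSpos : ∀ j ∈ S, 1 ≤ c j := by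
      intro j₀ hj₀
      by_contra h
      have hcj : c j₀ = 0 := by omega
      have hsub : Finset.univ.filter (fun j => 1 ≤ c j) ⊆ S.erase j₀ := by
        intro p hp
        have hp1 : 1 ≤ c p := (Finset.mem_filter.mp hp).2
        have hpS : p ∈ S := by
          by_contra hpS
          have := hStop j₀ hj₀ p hpS
          omega
        exact Finset.mem_erase.mpr ⟨fun e => by subst e; omega, hpS⟩
      have hcard2 : (Finset.univ.filter (fun j => 1 ≤ c j)).card ≤ q - 1 := by
        calc _ ≤ (S.erase j₀).card := Finset.card_le_card hsub
          _ = q - 1 := by rw [Finset.card_erase_of_mem hj₀, hScard]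
      have hq1 : 1 ≤ q := by
        have : 0 < S.card := Finset.card_pos.mpr ⟨j₀, hj₀⟩
        omega
      have h := hcond 1
      rw [hr0, hsum1] at h
      omega
    -- indicator sum
    have hindS : (∑ j, if j ∈ S then 1 else 0) = q := by
      rw [← Finset.card_filter]
      rw [Finset.filter_mem_eq_inter, Finset.univ_inter, hScard]
    set c' : Fin m → ℕ := fun j => c j - (if j ∈ S then 1 else 0) with hc'def
    have hc'c : ∀ j, c' j + (if j ∈ S then 1 else 0) = c j := by
      intro j
      by_cases hj : j ∈ S
      · have := hSpos j hj; simp [hc'def, hj]; omega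
      · simp [hc'def, hj]
    set r' : Fin n → ℕ := fun i => r i.succ with hr'def
    have hr' : Antitone r' := fun i j hij => hr (Fin.succ_le_succ_iff.mpr hij)
    have hsumc' : ∑ j, c' j + q = ∑ j, c j := by
      calc ∑ j, c' j + q = ∑ j, (c' j + if j ∈ S then 1 else 0) := by
            rw [Finset.sum_add_distrib, hindS]
        _ = ∑ j, c j := Finset.sum_congr rfl (fun j _ => hc'c j)
    have hsplit : ∀ k : ℕ, (∑ i : Fin (n+1), if (i:ℕ) < k + 1 then r i else 0)
        = q + ∑ i : Fin n, (if (i:ℕ) < k then r' i else 0) := by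
      intro k
      rw [Fin.sum_univ_succ]
      simp only [Fin.val_zero, Fin.val_succ, hr'def]
      congr 1
      · exact Finset.sum_congr rfl (fun i _ => by
          congr 1
          simp [Nat.succ_lt_succ_iff])
    have hsum' : ∑ i, r' i = ∑ j, c' j := by
      have h1 : ∑ i : Fin (n+1), r i = q + ∑ i, r' i := Fin.sum_univ_succ r
      omega
    have hcond' : ∀ k : ℕ,
        (∑ i : Fin n, if (i : ℕ) < k then r' i else 0) ≤ ∑ j, min (c' j) k := by
      intro k
      by_cases hall : ∀ j ∈ S, k + 1 ≤ c j
      · have heq : ∑ j, min (c' j) k = ∑ j, min (c j) k := by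
          refine Finset.sum_congr rfl (fun j _ => ?_)
          by_cases hj : j ∈ S
          · have := hall j hj; simp only [hc'def, hj, if_pos]; omega
          · simp [hc'def, hj]
        rw [heq]
        calc (∑ i : Fin n, if (i : ℕ) < k then r' i else 0)
            ≤ ∑ i : Fin n, (if ((i.castSucc : Fin (n+1)) : ℕ) < k then r (i.castSucc) else 0) := by
              refine Finset.sum_le_sum (fun i _ => ?_)
              simp only [Fin.coe_castSucc]
              split
              · exact hr (Fin.castSucc_le_succ i)
              · exact le_rfl
          _ ≤ ∑ i : Fin (n+1), (if (i:ℕ) < k then r i else 0) := by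
              rw [Fin.sum_univ_castSucc]
              exact Nat.le_add_right _ _
          _ ≤ ∑ j, min (c j) k := hcond k
      · push_neg at hall
        obtain ⟨j₁, hj₁S, hj₁⟩ := hall
        have hj₁k : c j₁ ≤ k := by omega
        have hout : ∀ j, j ∉ S → c j ≤ k := fun j hj => le_trans (hStop j₁ hj₁S j hj) hj₁k
        have heq : ∑ j, min (c j) (k+1) = (∑ j, min (c' j) k) + q := by
          calc ∑ j, min (c j) (k+1)
              = ∑ j, (min (c' j) k + if j ∈ S then 1 else 0) := by
                refine Finset.sum_congr rfl (fun j _ => ?_)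
                by_cases hj : j ∈ S
                · have := hSpos j hj; simp only [hc'def, if_pos hj]; omega
                · have := hout j hj; simp only [hc'def, if_neg hj]; omega
            _ = (∑ j, min (c' j) k) + q := by rw [Finset.sum_add_distrib, hindS]
        have h := hcond (k+1)
        rw [hsplit k, heq] at h
        omega
    obtain ⟨M', hrow', hcol'⟩ := ih r' c' hr' hsum' hcond'
    refine ⟨Fin.cases (fun j => decide (j ∈ S)) M', ?_, ?_⟩
    · intro i
      induction i using Fin.cases with
      | zero =>
        simp only [Fin.cases_zero]
        rw [← hqdef]
        calc (∑ j, if decide (j ∈ S) = true then 1 else 0)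
            = ∑ j, if j ∈ S then 1 else 0 :=
              Finset.sum_congr rfl (fun j _ => by simp)
          _ = q := hindS
      | succ i =>
        simp only [Fin.cases_succ]
        exact hrow' i
    · intro j
      rw [Fin.sum_univ_succ]
      simp only [Fin.cases_zero, Fin.cases_succ]
      erw [hcol' j]
      have h2 := hc'c j
      by_cases hj : j ∈ S
      · rw [if_pos hj] at h2
        simp only [decide_eq_true_eq]
        rw [if_pos hj]
        omega
      · rw [if_neg hj] at h2
        simp only [decide_eq_true_eq]
        rw [if_neg hj]
        omega

def bipAdj (m : ℕ) (M : Fin m → Fin m → Bool) :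
    (Fin m ⊕ Fin m) → (Fin m ⊕ Fin m) → Bool
  | .inl i, .inr j => M i j
  | .inr j, .inl i => M i j
  | .inl _, .inl _ => false
  | .inr _, .inr _ => false

@[simp] lemma bipAdj_inl_inr (m : ℕ) (M : Fin m → Fin m → Bool) (i j : Fin m) :
    bipAdj m M (.inl i) (.inr j) = M i j := rfl
@[simp] lemma bipAdj_inr_inl (m : ℕ) (M : Fin m → Fin m → Bool) (i j : Fin m) :
    bipAdj m M (.inr j) (.inl i) = M i j := rfl
@[simp] lemma bipAdj_inl_inl (m : ℕ) (M : Fin m → Fin m → Bool) (i j : Fin m) :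
    bipAdj m M (.inl i) (.inl j) = false := rfl
@[simp] lemma bipAdj_inr_inr (m : ℕ) (M : Fin m → Fin m → Bool) (i j : Fin m) :
    bipAdj m M (.inr i) (.inr j) = false := rfl

/-- Let `a ≥ 1` be real and `d : Fin m → ℕ` antitone. If `d₁ ≤ a * dₘ` and
`d₁ ≤ 4am/(a+1)²`, then there is a simple bipartite graph on parts `Fin m` and `Fin m`
(all edges joining the parts) whose degree sequence on each side is `d`. -/
theorem bipartite_realizable_of_balanced (a : ℝ) (ha : 1 ≤ a) (m : ℕ) (hm : 0 < m)
    (d : Fin m → ℕ) (hd : Antitone d)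
    (h1 : (d ⟨0, hm⟩ : ℝ) ≤ a * d ⟨m - 1, Nat.sub_lt hm one_pos⟩)
    (h2 : (d ⟨0, hm⟩ : ℝ) ≤ 4 * a * m / (a + 1) ^ 2) :
    ∃ (G : SimpleGraph (Fin m ⊕ Fin m)) (_ : DecidableRel G.Adj),
      (∀ u v, G.Adj u v → u.isLeft ≠ v.isLeft) ∧
      (∀ i : Fin m, G.degree (Sum.inl i) = d i) ∧
      (∀ i : Fin m, G.degree (Sum.inr i) = d i) := by
  set D := d ⟨0, hm⟩ with hDdef
  set δ := d ⟨m - 1, Nat.sub_lt hm one_pos⟩ with hδdef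
  have ha0 : (0:ℝ) < a := lt_of_lt_of_le one_pos ha
  have hdD : ∀ i, d i ≤ D := fun i => hd (by simp [Fin.le_def])
  have hδd : ∀ i, δ ≤ d i := fun i => hd (by simp [Fin.le_def]; omega)
  have hδD : δ ≤ D := hδd _
  have hpos : (0:ℝ) < (a + 1) ^ 2 := by positivity
  have hD2 : (D:ℝ) * (a + 1) ^ 2 ≤ 4 * a * m := by
    rw [← le_div_iff₀ hpos]; exact h2
  have hDmR : (D:ℝ) ≤ m := by
    nlinarith [mul_nonneg (Nat.cast_nonneg (α := ℝ) m) (sq_nonneg (a - 1))]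
  have hDm : D ≤ m := by exact_mod_cast hDmR
  -- key numeric inequality
  have hkey : ∀ k : ℕ, k < D → k * (D - k) ≤ (m - k) * min δ k := by
    intro k hk
    have hkm : k ≤ m := le_trans (le_of_lt hk) hDm
    rcases le_or_gt k δ with h | h
    · rw [min_eq_right h]
      calc k * (D - k) = (D - k) * k := mul_comm _ _
        _ ≤ (m - k) * k := Nat.mul_le_mul_right _ (Nat.sub_le_sub_right hDm k)
    · rw [min_eq_left (le_of_lt h)]
      have h1' : (D:ℝ) ≤ a * δ := h1
      have hδDR : (δ:ℝ) ≤ D := by exact_mod_cast hδD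
      have hδaD : (δ:ℝ) ≤ a * D := by nlinarith
      have hkR : (k:ℝ) < D := by exact_mod_cast hk
      have hδkR : (δ:ℝ) < k := by exact_mod_cast h
      have key : (k:ℝ) * (D - k) ≤ (m - k) * δ := by
        nlinarith [sq_nonneg ((D:ℝ) + δ - 2 * k),
          mul_nonneg (sub_nonneg.mpr h1') (sub_nonneg.mpr hδaD),
          mul_le_mul_of_nonneg_right hD2 (Nat.cast_nonneg (α := ℝ) δ),
          mul_nonneg ha0.le (sq_nonneg ((D:ℝ) + δ - 2 * k))]
      have := key
      rw [← Nat.cast_sub (le_of_lt hk), ← Nat.cast_sub hkm] at this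
      exact_mod_cast this
  -- Gale–Ryser condition
  have hcond : ∀ k : ℕ,
      (∑ i : Fin m, if (i : ℕ) < k then d i else 0) ≤ ∑ j, min (d j) k := by
    intro k
    rcases le_or_gt D k with hDk | hkD
    · refine Finset.sum_le_sum (fun i _ => ?_)
      split
      · rw [min_eq_left (le_trans (hdD i) hDk)]
      · exact Nat.zero_le _
    · have hcardF : (Finset.univ.filter (fun i : Fin m => (i:ℕ) < k)).card ≤ k := by
        calc (Finset.univ.filter (fun i : Fin m => (i:ℕ) < k)).card
            ≤ (Finset.range k).card := by
              refine Finset.card_le_card_of_injOn (fun i => (i:ℕ)) ?_ ?_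
              · intro i hi
                simp only [Finset.coe_filter, Set.mem_setOf_eq, Finset.mem_univ, true_and] at hi
                simpa using hi
              · intro i _ j _ h
                exact Fin.val_injective h
          _ = k := Finset.card_range k
      have hcardFc : m - k ≤ (Finset.univ.filter (fun i : Fin m => ¬ (i:ℕ) < k)).card := by
        have := Finset.card_filter_add_card_filter_not
          (s := (Finset.univ : Finset (Fin m))) (p := fun i : Fin m => (i:ℕ) < k)
        rw [Finset.card_univ, Fintype.card_fin] at this
        omega
      calc (∑ i : Fin m, if (i : ℕ) < k then d i else 0)
          = ∑ i ∈ Finset.univ.filter (fun i : Fin m => (i:ℕ) < k), d i :=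
            (Finset.sum_filter _ _).symm
        _ ≤ ∑ i ∈ Finset.univ.filter (fun i : Fin m => (i:ℕ) < k), (min (d i) k + (D - k)) := by
            refine Finset.sum_le_sum (fun i _ => ?_)
            have := hdD i
            omega
        _ = (∑ i ∈ Finset.univ.filter (fun i : Fin m => (i:ℕ) < k), min (d i) k)
            + (Finset.univ.filter (fun i : Fin m => (i:ℕ) < k)).card * (D - k) := by
            rw [Finset.sum_add_distrib, Finset.sum_const, smul_eq_mul]
        _ ≤ (∑ i ∈ Finset.univ.filter (fun i : Fin m => (i:ℕ) < k), min (d i) k)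
            + (m - k) * min δ k := by
            have h1'' : (Finset.univ.filter (fun i : Fin m => (i:ℕ) < k)).card * (D - k)
                ≤ k * (D - k) := Nat.mul_le_mul_right _ hcardF
            have h2'' := hkey k hkD
            omega
        _ ≤ (∑ i ∈ Finset.univ.filter (fun i : Fin m => (i:ℕ) < k), min (d i) k)
            + ∑ i ∈ Finset.univ.filter (fun i : Fin m => ¬ (i:ℕ) < k), min (d i) k := by
            refine Nat.add_le_add_left ?_ _
            calc (m - k) * min δ k
                ≤ (Finset.univ.filter (fun i : Fin m => ¬ (i:ℕ) < k)).card * min δ k :=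
                  Nat.mul_le_mul_right _ hcardFc
              _ ≤ ∑ i ∈ Finset.univ.filter (fun i : Fin m => ¬ (i:ℕ) < k), min (d i) k := by
                  rw [← smul_eq_mul]
                  exact Finset.card_nsmul_le_sum _ _ _
                    (fun i _ => min_le_min (hδd i) le_rfl)
        _ = ∑ j, min (d j) k := Finset.sum_filter_add_sum_filter_not _ _ _
  obtain ⟨M, hrow, hcol⟩ := gr_core m m d d hd rfl hcond
  refine ⟨{ Adj := fun u v => bipAdj m M u v = true
            symm := ⟨by rintro (i|i) (j|j) h <;> simpa using h⟩
            loopless := ⟨by rintro (i|i) h <;> simpa using h⟩ },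
    fun u v => (inferInstance : Decidable (bipAdj m M u v = true)), ?_, ?_, ?_⟩
  · rintro (i|i) (j|j) h <;> simp at h ⊢
  · intro i
    rw [SimpleGraph.degree, SimpleGraph.neighborFinset_eq_filter, Finset.card_filter]
    rw [Fintype.sum_sum_type]
    simp only [bipAdj_inl_inl, bipAdj_inl_inr]
    convert hrow i using 2
    convert zero_add _ using 2
    exact Finset.sum_eq_zero (fun _ _ => if_neg Bool.false_ne_true)
    congr
  · intro j
    rw [SimpleGraph.degree, SimpleGraph.neighborFinset_eq_filter, Finset.card_filter]
    rw [Fintype.sum_sum_type]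
    simp only [bipAdj_inr_inr, bipAdj_inr_inl]
    convert hcol j using 2
    convert add_zero _ using 2
    exact Finset.sum_eq_zero (fun _ _ => if_neg Bool.false_ne_true)
    congr
end

section
/- Let d = (d_1, …, d_m) be a list of non-negative integers with d_1 ≥ … ≥ d_m. If d_1 ≤ 2·d_m and 9·d_1 ≤ 8·m, then there exists a simple bipartite graph on parts A = {a_1,…,a_m} and B = {b_1,…,b_m} (all edges joining A to B) in which a_i has degree d_i and b_i has degree d_i for every 1 ≤ i ≤ m. -/
open Finset

private lemma arith_key (c a b e : ℕ) (hab : a + b ≤ c)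
    (h9 : c + a + 9 * b ≤ 8 * e) : (c + a) * b ≤ e * c := by
  have h2 : 8 * ((c + a) * b) ≤ (c + a + 9 * b) * c := by
    nlinarith [two_mul_le_add_sq a b, Nat.mul_le_mul hab (le_refl c),
      Nat.mul_le_mul (le_refl (a + b)) hab]
  have h3 : (c + a + 9 * b) * c ≤ 8 * (e * c) := by
    calc (c + a + 9*b) * c ≤ (8*e) * c := Nat.mul_le_mul h9 (le_refl c)
    _ = 8 * (e * c) := by ring
  exact Nat.le_of_mul_le_mul_left (le_trans h2 h3) (by norm_num)

private lemma arith_ineq (m k c D : ℕ) (hkm : k ≤ m) (hD2c : D ≤ 2 * c) (h9 : 9 * D ≤ 8 * m) :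
    k * (D - k) ≤ (m - k) * min c k := by
  rcases le_or_gt D k with h | h
  · simp [Nat.sub_eq_zero_of_le h]
  rcases le_total k c with hkc | hck
  · rw [min_eq_right hkc]
    have h1 : D - k ≤ m - k := by omega
    calc k * (D - k) ≤ k * (m - k) := Nat.mul_le_mul (le_refl k) h1
    _ = (m - k) * k := Nat.mul_comm _ _
  · rw [min_eq_left hck]
    obtain ⟨a, rfl⟩ : ∃ a, k = c + a := ⟨k - c, by omega⟩
    obtain ⟨b, rfl⟩ : ∃ b, D = (c + a) + b := ⟨D - (c + a), by omega⟩
    obtain ⟨e, rfl⟩ : ∃ e, m = (c + a) + e := ⟨m - (c + a), by omega⟩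
    have h1 : a + b ≤ c := by omega
    have h2 : c + a + 9 * b ≤ 8 * e := by omega
    have h3 : (c + a) + b - (c + a) = b := by omega
    have h4 : (c + a) + e - (c + a) = e := by omega
    rw [h3, h4]
    exact arith_key c a b e h1 h2

private lemma realize (m : ℕ) :
    ∀ (n : ℕ) (r s : Fin m → ℕ), (∑ i, r i) ≤ n → (∑ i, r i) = (∑ j, s j) →
    (∀ A : Finset (Fin m), ∑ i ∈ A, r i ≤ ∑ j, min (s j) A.card) →
    ∃ M : Finset (Fin m × Fin m),
      (∀ i, (M.filter fun p => p.1 = i).card = r i) ∧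
      (∀ j, (M.filter fun p => p.2 = j).card = s j) := by
  intro n
  induction n with
  | zero =>
    intro r s hn hS _
    have hr : ∀ i, r i = 0 := fun i =>
      Finset.sum_eq_zero_iff.mp (Nat.le_zero.mp hn) i (mem_univ i)
    have hs : ∀ j, s j = 0 := fun j =>
      Finset.sum_eq_zero_iff.mp (hS ▸ Nat.le_zero.mp hn) j (mem_univ j)
    exact ⟨∅, fun i => by simp [hr i], fun j => by simp [hs j]⟩
  | succ n ih =>
    intro r s hn hS hGR
    by_cases h0 : ∑ i, r i = 0
    · have hr : ∀ i, r i = 0 := fun i => Finset.sum_eq_zero_iff.mp h0 i (mem_univ i)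
      have hs : ∀ j, s j = 0 := fun j => Finset.sum_eq_zero_iff.mp (hS ▸ h0) j (mem_univ j)
      exact ⟨∅, fun i => by simp [hr i], fun j => by simp [hs j]⟩
    · -- there is a nonzero row
      have huniv : (univ : Finset (Fin m)).Nonempty := by
        by_contra h
        rw [Finset.not_nonempty_iff_eq_empty] at h
        rw [h] at h0; simp at h0
      obtain ⟨istar, -, hmax⟩ := Finset.exists_max_image univ r huniv
      have hmax' : ∀ i, r i ≤ r istar := fun i => hmax i (mem_univ i)
      have hrstar1 : 1 ≤ r istar := by
        by_contra h
        have : ∀ i, r i = 0 := fun i => by have := hmax' i; omega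
        exact h0 (Finset.sum_eq_zero fun i _ => this i)
      -- r istar ≤ number of columns with s ≥ 1 ≤ m
      have hGR1 := hGR {istar}
      rw [Finset.sum_singleton, Finset.card_singleton] at hGR1
      have hmin1 : ∀ j : Fin m, min (s j) 1 = if 1 ≤ s j then 1 else 0 := by
        intro j; cases s j with
        | zero => simp
        | succ k => simp [Nat.succ_le_succ]
      have hGR1' : r istar ≤ (univ.filter fun j => 1 ≤ s j).card := by
        calc r istar ≤ ∑ j, min (s j) 1 := hGR1
        _ = ∑ j : Fin m, (if 1 ≤ s j then 1 else 0) := Finset.sum_congr rfl fun j _ => hmin1 j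
        _ = (univ.filter fun j => 1 ≤ s j).card := by simp [Finset.sum_boole]
      have hrm : r istar ≤ m := by
        calc r istar ≤ (univ.filter fun j => 1 ≤ s j).card := hGR1'
        _ ≤ (univ : Finset (Fin m)).card := Finset.card_le_card (Finset.filter_subset _ _)
        _ = m := by simp
      -- choose B : the r istar columns with largest s
      obtain ⟨B, hBmem, hBmax⟩ := Finset.exists_max_image (univ.powersetCard (r istar))
        (fun C => ∑ j ∈ C, s j)
        (Finset.powersetCard_nonempty.mpr (by simpa using hrm))
      obtain ⟨hBsub, hBcard⟩ := Finset.mem_powersetCard.mp hBmem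
      -- P1 : any column outside B has s-value ≤ any column in B
      have P1 : ∀ j ∈ B, ∀ j', j' ∉ B → s j' ≤ s j := by
        intro j hj j' hj'
        have hj'e : j' ∉ B.erase j := fun h => hj' (Finset.erase_subset _ _ h)
        have hC : insert j' (B.erase j) ∈ univ.powersetCard (r istar) := by
          rw [Finset.mem_powersetCard]
          constructor
          · intro x _; exact mem_univ x
          · rw [Finset.card_insert_of_notMem hj'e, Finset.card_erase_of_mem hj, hBcard]
            omega
        have h := hBmax _ hC
        rw [Finset.sum_insert hj'e] at h
        have he : ∑ x ∈ B.erase j, s x + s j = ∑ x ∈ B, s x := Finset.sum_erase_add B s hj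
        omega
      -- P2 : all columns in B have s ≥ 1
      have P2 : ∀ j ∈ B, 1 ≤ s j := by
        intro j0 hj0
        by_contra h
        have hs0 : s j0 = 0 := by omega
        have hsub : (univ.filter fun j => 1 ≤ s j) ⊆ B := by
          intro j' hj'
          rw [Finset.mem_filter] at hj'
          by_contra hj'B
          have := P1 j0 hj0 j' hj'B
          omega
        have hss : (univ.filter fun j => 1 ≤ s j) ⊂ B := by
          refine Finset.ssubset_iff_of_subset hsub |>.mpr ⟨j0, hj0, ?_⟩
          simp [hs0]
        have := Finset.card_lt_card hss
        omega
      -- decremented sequences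
      set r' : Fin m → ℕ := Function.update r istar 0 with hr'def
      set s' : Fin m → ℕ := fun j => s j - (if j ∈ B then 1 else 0) with hs'def
      have hr'istar : r' istar = 0 := by simp [hr'def]
      have hr'ne : ∀ i, i ≠ istar → r' i = r i := fun i hi => Function.update_of_ne hi _ _
      have hindsum : ∑ j : Fin m, (if j ∈ B then 1 else 0) = r istar := by
        rw [Finset.sum_ite_mem]
        simp [Finset.univ_inter, hBcard]
      have hSr' : ∑ i, r' i + r istar = ∑ i, r i := by
        rw [hr'def, Finset.sum_update_of_mem (mem_univ istar), zero_add,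
          Finset.sdiff_singleton_eq_erase]
        exact Finset.sum_erase_add _ _ (mem_univ istar)
      have hs'val : ∀ j, s' j + (if j ∈ B then 1 else 0) = s j := by
        intro j
        by_cases hj : j ∈ B
        · have := P2 j hj; simp [hs'def, hj]; omega
        · simp [hs'def, hj]
      have hSs' : ∑ j, s' j + r istar = ∑ j, s j := by
        calc ∑ j, s' j + r istar = ∑ j, s' j + ∑ j : Fin m, (if j ∈ B then 1 else 0) := by
              rw [hindsum]
        _ = ∑ j, (s' j + if j ∈ B then 1 else 0) := (Finset.sum_add_distrib).symm
        _ = ∑ j, s j := Finset.sum_congr rfl fun j _ => hs'val j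
      -- GR condition is preserved
      have key : ∀ A : Finset (Fin m), istar ∉ A →
          ∑ i ∈ A, r i ≤ ∑ j, min (s' j) A.card := by
        intro A hA
        by_cases hHB : (univ.filter fun j => A.card + 1 ≤ s j) ⊆ B
        · -- all high columns are in B
          have hGRA := hGR (insert istar A)
          rw [Finset.sum_insert hA, Finset.card_insert_of_notMem hA] at hGRA
          have hterm : ∀ j : Fin m, min (s j) (A.card + 1) ≤
              min (s' j) A.card + (if j ∈ B then 1 else 0) := by
            intro j
            by_cases hj : j ∈ B
            · have h1 := P2 j hj
              have : s' j = s j - 1 := by simp [hs'def, hj]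
              rw [this]
              simp only [hj, if_true]
              rcases Nat.lt_or_ge (s j) (A.card + 1) with h | h
              · rw [min_eq_left (by omega), min_eq_left (by omega)]; omega
              · rw [min_eq_right (by omega), min_eq_right (by omega)]
            · have hjH : j ∉ univ.filter fun j => A.card + 1 ≤ s j := fun h => hj (hHB h)
              rw [Finset.mem_filter] at hjH
              have hsj : s j ≤ A.card := by
                rcases Nat.lt_or_ge (s j) (A.card + 1) with h | h
                · omega
                · exact absurd ⟨mem_univ j, h⟩ hjH
              have : s' j = s j := by simp [hs'def, hj]
              rw [this, min_eq_left (by omega), min_eq_left (by omega)]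
              simp
          have hsum2 : ∑ j, min (s j) (A.card + 1) ≤
              ∑ j, min (s' j) A.card + r istar := by
            calc ∑ j, min (s j) (A.card + 1)
                ≤ ∑ j, (min (s' j) A.card + if j ∈ B then 1 else 0) :=
                  Finset.sum_le_sum fun j _ => hterm j
            _ = ∑ j, min (s' j) A.card + ∑ j : Fin m, (if j ∈ B then 1 else 0) :=
                  Finset.sum_add_distrib
            _ = ∑ j, min (s' j) A.card + r istar := by rw [hindsum]
          omega
        · -- some high column is outside B: B consists of high columns
          obtain ⟨j', hj'H, hj'B⟩ := Finset.not_subset.mp hHB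
          rw [Finset.mem_filter] at hj'H
          have hBhigh : ∀ j ∈ B, A.card + 1 ≤ s j := fun j hj =>
            le_trans hj'H.2 (P1 j hj j' hj'B)
          have hBH : B ⊆ univ.filter fun j => A.card + 1 ≤ s j := fun j hj =>
            Finset.mem_filter.mpr ⟨mem_univ j, hBhigh j hj⟩
          have hcardH : r istar + 1 ≤ (univ.filter fun j => A.card + 1 ≤ s j).card := by
            have hss : B ⊂ univ.filter fun j => A.card + 1 ≤ s j :=
              Finset.ssubset_iff_of_subset hBH |>.mpr
                ⟨j', Finset.mem_filter.mpr ⟨mem_univ j', hj'H.2⟩, hj'B⟩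
            have := Finset.card_lt_card hss
            omega
          have hmins : ∀ j ∈ univ.filter (fun j => A.card + 1 ≤ s j),
              A.card ≤ min (s' j) A.card := by
            intro j hj
            rw [Finset.mem_filter] at hj
            have hj2 := hj.2
            have : A.card ≤ s' j := by
              by_cases hb : j ∈ B <;> simp [hs'def, hb] <;> omega
            omega
          calc ∑ i ∈ A, r i ≤ ∑ _i ∈ A, r istar := Finset.sum_le_sum fun i _ => hmax' i
          _ = A.card * r istar := by rw [Finset.sum_const, smul_eq_mul]
          _ ≤ A.card * (univ.filter fun j => A.card + 1 ≤ s j).card := by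
              exact Nat.mul_le_mul (le_refl _) (by omega)
          _ = ∑ _j ∈ univ.filter (fun j => A.card + 1 ≤ s j), A.card := by
              rw [Finset.sum_const, smul_eq_mul, Nat.mul_comm]
          _ ≤ ∑ j ∈ univ.filter (fun j => A.card + 1 ≤ s j), min (s' j) A.card :=
              Finset.sum_le_sum hmins
          _ ≤ ∑ j, min (s' j) A.card :=
              Finset.sum_le_sum_of_subset (Finset.filter_subset _ _)
      have hGR' : ∀ A : Finset (Fin m), ∑ i ∈ A, r' i ≤ ∑ j, min (s' j) A.card := by
        intro A
        have h1 : ∑ i ∈ A, r' i = ∑ i ∈ A.erase istar, r i := by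
          rw [← Finset.sum_erase A (f := r') hr'istar]
          exact Finset.sum_congr rfl fun i hi => hr'ne i (Finset.ne_of_mem_erase hi)
        have h2 : (A.erase istar).card ≤ A.card := Finset.card_le_card (Finset.erase_subset _ _)
        rw [h1]
        calc ∑ i ∈ A.erase istar, r i
            ≤ ∑ j, min (s' j) (A.erase istar).card := key _ (Finset.notMem_erase _ _)
        _ ≤ ∑ j, min (s' j) A.card :=
            Finset.sum_le_sum fun j _ => le_min (min_le_left _ _) (le_trans (min_le_right _ _) h2)
      -- apply induction hypothesis
      have hn' : ∑ i, r' i ≤ n := by omega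
      have hS' : ∑ i, r' i = ∑ j, s' j := by omega
      obtain ⟨M', hrow', hcol'⟩ := ih r' s' hn' hS' hGR'
      -- the istar-row of M' is empty
      have hM'istar : M'.filter (fun p => p.1 = istar) = ∅ := by
        rw [← Finset.card_eq_zero, hrow' istar, hr'istar]
      refine ⟨M' ∪ {istar} ×ˢ B, ?_, ?_⟩
      · intro i
        rw [Finset.filter_union]
        by_cases hi : i = istar
        · subst hi
          rw [hM'istar, Finset.empty_union]
          have : ({i} ×ˢ B).filter (fun p => p.1 = i) = {i} ×ˢ B :=
            Finset.filter_true_of_mem fun p hp => Finset.mem_singleton.mp (Finset.mem_product.mp hp).1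
          rw [this, Finset.card_product, Finset.card_singleton, one_mul, hBcard]
        · have h2 : ({istar} ×ˢ B).filter (fun p => p.1 = i) = ∅ := by
            apply Finset.filter_false_of_mem
            intro p hp
            have := (Finset.mem_product.mp hp).1
            simp only [Finset.mem_singleton] at this
            rw [this]
            exact fun h => hi h.symm
          rw [h2, Finset.union_empty, hrow' i, hr'ne i hi]
      · intro j
        rw [Finset.filter_union]
        have hdisj : Disjoint (M'.filter fun p => p.2 = j)
            (({istar} ×ˢ B).filter fun p => p.2 = j) := by
          rw [Finset.disjoint_left]
          intro p hp1 hp2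
          have hp1' := Finset.mem_filter.mp hp1
          have hp2' := Finset.mem_filter.mp hp2
          have : p.1 = istar := by
            have := (Finset.mem_product.mp hp2'.1).1
            simpa using this
          have : p ∈ M'.filter (fun p => p.1 = istar) :=
            Finset.mem_filter.mpr ⟨hp1'.1, this⟩
          rw [hM'istar] at this
          exact absurd this (Finset.notMem_empty p)
        rw [Finset.card_union_of_disjoint hdisj, hcol' j]
        have h2 : (({istar} ×ˢ B).filter fun p => p.2 = j).card = (if j ∈ B then 1 else 0) := by
          have : ({istar} ×ˢ B).filter (fun p => p.2 = j) = {istar} ×ˢ (B.filter fun b => b = j) := by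
            ext p
            simp only [Finset.mem_filter, Finset.mem_product, Finset.mem_singleton]
            tauto
          rw [this, Finset.card_product, Finset.card_singleton, one_mul, Finset.filter_eq']
          by_cases hj : j ∈ B <;> simp [hj]
        rw [h2]
        exact hs'val j

private def bipGraph (m : ℕ) (M : Finset (Fin m × Fin m)) : SimpleGraph (Fin m ⊕ Fin m) where
  Adj u v := match u, v with
    | .inl i, .inr j => (i, j) ∈ M
    | .inr j, .inl i => (i, j) ∈ M
    | _, _ => False
  symm := ⟨fun u v h => by cases u <;> cases v <;> exact h⟩
  loopless := ⟨fun u h => by cases u <;> exact h⟩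

private def bipGraphDec (m : ℕ) (M : Finset (Fin m × Fin m)) :
    DecidableRel (bipGraph m M).Adj
  | .inl _, .inl _ => .isFalse fun h => h
  | .inl i, .inr j => inferInstanceAs (Decidable ((i, j) ∈ M))
  | .inr j, .inl i => inferInstanceAs (Decidable ((i, j) ∈ M))
  | .inr _, .inr _ => .isFalse fun h => h

private lemma bipGraph_degL (m : ℕ) (M : Finset (Fin m × Fin m)) (i : Fin m) :
    @SimpleGraph.degree _ (bipGraph m M) (Sum.inl i)
      (@SimpleGraph.neighborSetFintype _ _ _ (bipGraphDec m M) _) =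
    (M.filter fun p => p.1 = i).card := by
  letI := bipGraphDec m M
  rw [SimpleGraph.degree, SimpleGraph.neighborFinset_eq_filter]
  symm
  apply Finset.card_bij (fun p _ => Sum.inr p.2)
  · intro p hp
    obtain ⟨hpM, hp1⟩ := Finset.mem_filter.mp hp
    refine Finset.mem_filter.mpr ⟨mem_univ _, ?_⟩
    show (i, p.2) ∈ M
    have : (i, p.2) = p := by rw [← hp1]
    rw [this]; exact hpM
  · intro p hp q hq h
    obtain ⟨-, hp1⟩ := Finset.mem_filter.mp hp
    obtain ⟨-, hq1⟩ := Finset.mem_filter.mp hq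
    have h2 : p.2 = q.2 := by injection h
    exact Prod.ext (hp1.trans hq1.symm) h2
  · intro v hv
    obtain ⟨-, hadj⟩ := Finset.mem_filter.mp hv
    match v, hadj with
    | Sum.inr j, hadj =>
      exact ⟨(i, j), Finset.mem_filter.mpr ⟨hadj, rfl⟩, rfl⟩

private lemma bipGraph_degR (m : ℕ) (M : Finset (Fin m × Fin m)) (j : Fin m) :
    @SimpleGraph.degree _ (bipGraph m M) (Sum.inr j)
      (@SimpleGraph.neighborSetFintype _ _ _ (bipGraphDec m M) _) =
    (M.filter fun p => p.2 = j).card := by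
  letI := bipGraphDec m M
  rw [SimpleGraph.degree, SimpleGraph.neighborFinset_eq_filter]
  symm
  apply Finset.card_bij (fun p _ => Sum.inl p.1)
  · intro p hp
    obtain ⟨hpM, hp2⟩ := Finset.mem_filter.mp hp
    refine Finset.mem_filter.mpr ⟨mem_univ _, ?_⟩
    show (p.1, j) ∈ M
    have : (p.1, j) = p := by rw [← hp2]
    rw [this]; exact hpM
  · intro p hp q hq h
    obtain ⟨-, hp1⟩ := Finset.mem_filter.mp hp
    obtain ⟨-, hq1⟩ := Finset.mem_filter.mp hq
    have h2 : p.1 = q.1 := by injection h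
    exact Prod.ext h2 (hp1.trans hq1.symm)
  · intro v hv
    obtain ⟨-, hadj⟩ := Finset.mem_filter.mp hv
    match v, hadj with
    | Sum.inl i, hadj =>
      exact ⟨(i, j), Finset.mem_filter.mpr ⟨hadj, rfl⟩, rfl⟩

/-- Let `d : Fin m → ℕ` be antitone. If `d₁ ≤ 2 * dₘ` and `9 * d₁ ≤ 8 * m`, then there is
a simple bipartite graph on parts `Fin m` and `Fin m` (all edges joining the parts)
whose degree sequence on each side is `d`. -/
theorem bipartite_realizable_of_balanced' (m : ℕ) (hm : 0 < m)
    (d : Fin m → ℕ) (hd : Antitone d)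
    (h1 : d ⟨0, hm⟩ ≤ 2 * d ⟨m - 1, Nat.sub_lt hm one_pos⟩)
    (h2 : 9 * d ⟨0, hm⟩ ≤ 8 * m) :
    ∃ (G : SimpleGraph (Fin m ⊕ Fin m)) (_ : DecidableRel G.Adj),
      (∀ u v, G.Adj u v → u.isLeft ≠ v.isLeft) ∧
      (∀ i : Fin m, G.degree (Sum.inl i) = d i) ∧
      (∀ i : Fin m, G.degree (Sum.inr i) = d i) := by
  have hdub : ∀ j, d j ≤ d ⟨0, hm⟩ := fun j => hd (by simp [Fin.le_def])
  have hdlb : ∀ j, d ⟨m - 1, Nat.sub_lt hm one_pos⟩ ≤ d j := fun j =>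
    hd (by simp [Fin.le_def]; omega)
  have hGR : ∀ A : Finset (Fin m), ∑ i ∈ A, d i ≤ ∑ j, min (d j) A.card := by
    intro A
    have hkm : A.card ≤ m := by simpa using Finset.card_le_univ A
    have e1 : ∀ i ∈ A, d i = min (d i) A.card + (d i - A.card) := by
      intro i _
      rcases le_total (d i) A.card with h | h
      · rw [min_eq_left h]; omega
      · rw [min_eq_right h]; omega
    have e2 : ∑ i ∈ A, (d i - A.card) ≤ A.card * (d ⟨0, hm⟩ - A.card) := by
      calc ∑ i ∈ A, (d i - A.card) ≤ ∑ _i ∈ A, (d ⟨0, hm⟩ - A.card) :=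
            Finset.sum_le_sum fun i _ => Nat.sub_le_sub_right (hdub i) _
      _ = A.card * (d ⟨0, hm⟩ - A.card) := by rw [Finset.sum_const, smul_eq_mul]
    have e3 := arith_ineq m A.card (d ⟨m - 1, Nat.sub_lt hm one_pos⟩) (d ⟨0, hm⟩) hkm h1 h2
    have e4 : (m - A.card) * min (d ⟨m - 1, Nat.sub_lt hm one_pos⟩) A.card ≤
        ∑ j ∈ Aᶜ, min (d j) A.card := by
      have hcardc : Aᶜ.card = m - A.card := by
        rw [Finset.card_compl]; simp
      calc (m - A.card) * min (d ⟨m - 1, Nat.sub_lt hm one_pos⟩) A.card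
          = Aᶜ.card • min (d ⟨m - 1, Nat.sub_lt hm one_pos⟩) A.card := by
            rw [hcardc, smul_eq_mul]
      _ ≤ ∑ j ∈ Aᶜ, min (d j) A.card :=
            Finset.card_nsmul_le_sum _ _ _ fun j _ => min_le_min (hdlb j) (le_refl _)
    have e5 : ∑ i ∈ A, min (d i) A.card + ∑ j ∈ Aᶜ, min (d j) A.card
        = ∑ j, min (d j) A.card := Finset.sum_add_sum_compl A _
    calc ∑ i ∈ A, d i = ∑ i ∈ A, (min (d i) A.card + (d i - A.card)) :=
          Finset.sum_congr rfl e1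
    _ = ∑ i ∈ A, min (d i) A.card + ∑ i ∈ A, (d i - A.card) := Finset.sum_add_distrib
    _ ≤ ∑ j, min (d j) A.card := by omega
  obtain ⟨M, hrow, hcol⟩ := realize m (∑ i, d i) d d le_rfl rfl hGR
  refine ⟨bipGraph m M, bipGraphDec m M, ?_, ?_, ?_⟩
  · intro u v h
    cases u <;> cases v <;> first | exact absurd h (fun h => h) | simp [Sum.isLeft]
  · intro i
    rw [bipGraph_degL m M i]
    exact hrow i
  · intro j
    rw [bipGraph_degR m M j]
    exact hcol j
end

section
/- Let a > 1 be a real number and m a positive integer such that s := 2m/(a+1) and e := 4m/(a+1)² are positive integers, and let d_1, …, d_m be non-negative integers with d_1 = d_2 = … = d_s, d_i = e for all s+1 ≤ i ≤ m, and d_1 > 4am/(a+1)². Then there is NO simple bipartite graph on parts A = {a_1,…,a_m} and B = {b_1,…,b_m} (all edges joining A to B) in which a_i has degree d_i and b_i has degree d_i for every 1 ≤ i ≤ m. -/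
/-- Tightness of the condition `d₁ ≤ min {a·dₘ, 4am/(a+1)²}`: for `a > 1`, if
`s = 2m/(a+1)` and `e = 4m/(a+1)²` are positive integers, `d₁ = ⋯ = d_s`,
`d_i = e` for all `s+1 ≤ i ≤ m`, and `d₁ > 4am/(a+1)²`, then no simple bipartite
graph on parts `Fin m` and `Fin m` has degree sequence `d` on both sides. -/
theorem bipartite_not_realizable_tight (a : ℝ) (ha : 1 < a) (m : ℕ) (hm : 0 < m)
    (s e : ℕ) (hs : 0 < s) (he : 0 < e)
    (hsa : (s : ℝ) = 2 * m / (a + 1)) (hea : (e : ℝ) = 4 * m / (a + 1) ^ 2)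
    (d : Fin m → ℕ)
    (hconst : ∀ i j : Fin m, (i : ℕ) < s → (j : ℕ) < s → d i = d j)
    (htail : ∀ i : Fin m, s ≤ (i : ℕ) → d i = e)
    (hbig : 4 * a * m / (a + 1) ^ 2 < (d ⟨0, hm⟩ : ℝ)) :
    ¬ ∃ (G : SimpleGraph (Fin m ⊕ Fin m)) (_ : DecidableRel G.Adj),
        (∀ u v, G.Adj u v → u.isLeft ≠ v.isLeft) ∧
        (∀ i : Fin m, G.degree (Sum.inl i) = d i) ∧
        (∀ i : Fin m, G.degree (Sum.inr i) = d i) := by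
  rintro ⟨G, hdec, hbip, hA, hB⟩
  set d1 := d ⟨0, hm⟩ with hd1
  have ha1 : (0:ℝ) < a + 1 := by linarith
  -- basic real identities
  have hsm : (s:ℝ) * (a + 1) = 2 * m := by
    field_simp at hsa; linarith
  have hem : (e:ℝ) * (a + 1) ^ 2 = 4 * m := by
    field_simp at hea; linarith
  -- e ≤ s
  have h2s : (e:ℝ) * (a + 1) = 2 * s := by
    have hne : (a + 1) ≠ 0 := by positivity
    apply mul_right_cancel₀ hne
    linear_combination hem - 2 * hsm
  have hes : e ≤ s := by
    have heR : (0:ℝ) ≤ e := Nat.cast_nonneg e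
    have : (e:ℝ) ≤ s := by nlinarith [h2s, mul_nonneg heR (by linarith : (0:ℝ) ≤ a - 1)]
    exact_mod_cast this
  -- s < m
  have hsm' : s < m := by
    have : (s:ℝ) < m := by nlinarith [hsm, (by exact_mod_cast hs : (0:ℝ) < (s:ℝ))]
    exact_mod_cast this
  -- degree counts
  have degA : ∀ i : Fin m,
      (Finset.univ.filter (fun j : Fin m => G.Adj (Sum.inl i) (Sum.inr j))).card = d i := by
    intro i
    rw [← hA i, ← SimpleGraph.card_neighborFinset_eq_degree]
    apply Finset.card_bij (fun j _ => Sum.inr j)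
    · intro j hj
      rw [SimpleGraph.mem_neighborFinset]
      exact (Finset.mem_filter.mp hj).2
    · intro j1 _ j2 _ h
      exact Sum.inr.inj h
    · intro v hv
      rw [SimpleGraph.mem_neighborFinset] at hv
      have hne := hbip _ _ hv
      match v with
      | Sum.inl j => simp at hne
      | Sum.inr j => exact ⟨j, Finset.mem_filter.mpr ⟨Finset.mem_univ _, hv⟩, rfl⟩
  have degB : ∀ j : Fin m,
      (Finset.univ.filter (fun i : Fin m => G.Adj (Sum.inl i) (Sum.inr j))).card = d j := by
    intro j
    rw [← hB j, ← SimpleGraph.card_neighborFinset_eq_degree]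
    apply Finset.card_bij (fun i _ => Sum.inl i)
    · intro i hi
      rw [SimpleGraph.mem_neighborFinset]
      exact (Finset.mem_filter.mp hi).2.symm
    · intro i1 _ i2 _ h
      exact Sum.inl.inj h
    · intro v hv
      rw [SimpleGraph.mem_neighborFinset] at hv
      have hne := hbip _ _ hv
      match v with
      | Sum.inr i => simp at hne
      | Sum.inl i => exact ⟨i, Finset.mem_filter.mpr ⟨Finset.mem_univ _, hv.symm⟩, rfl⟩
  -- card of {i < s}
  have hcards : (Finset.univ.filter (fun i : Fin m => (i:ℕ) < s)).card = s := by
    have heq : Finset.univ.filter (fun i : Fin m => (i:ℕ) < s)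
        = (Finset.range s).attachFin
          (fun x hx => lt_trans (Finset.mem_range.mp hx) hsm') := by
      ext i
      simp [Finset.mem_attachFin]
    rw [heq, Finset.card_attachFin, Finset.card_range]
  -- the double count
  set N : ℕ := ∑ p : Fin m × Fin m,
      if ((p.1:ℕ) < s ∧ G.Adj (Sum.inl p.1) (Sum.inr p.2)) then 1 else 0 with hN
  have h1 : N = s * d1 := by
    rw [hN, Fintype.sum_prod_type]
    have : ∀ i : Fin m, (∑ j : Fin m,
        if ((i:ℕ) < s ∧ G.Adj (Sum.inl i) (Sum.inr j)) then 1 else 0)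
        = if (i:ℕ) < s then d1 else 0 := by
      intro i
      by_cases hi : (i:ℕ) < s
      · simp only [hi, true_and, if_true]
        rw [hd1, ← hconst i ⟨0, hm⟩ hi hs, ← degA i, Finset.card_filter]
      · simp [hi]
    rw [Finset.sum_congr rfl (fun i _ => this i), ← Finset.sum_filter,
      Finset.sum_const, hcards, smul_eq_mul]
  have h2 : N ≤ s * s + (m - s) * e := by
    rw [hN, Fintype.sum_prod_type_right]
    have hcol : ∀ j : Fin m, (∑ i : Fin m,
        if ((i:ℕ) < s ∧ G.Adj (Sum.inl i) (Sum.inr j)) then 1 else 0)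
        ≤ if (j:ℕ) < s then s else e := by
      intro j
      rw [← Finset.card_filter]
      by_cases hj : (j:ℕ) < s
      · simp only [hj, if_true]
        calc (Finset.univ.filter (fun i : Fin m =>
              (i:ℕ) < s ∧ G.Adj (Sum.inl i) (Sum.inr j))).card
            ≤ (Finset.univ.filter (fun i : Fin m => (i:ℕ) < s)).card := by
              apply Finset.card_le_card
              intro i hi
              simp only [Finset.mem_filter] at *
              exact ⟨hi.1, hi.2.1⟩
          _ = s := hcards
      · simp only [hj, if_false]
        calc (Finset.univ.filter (fun i : Fin m =>
              (i:ℕ) < s ∧ G.Adj (Sum.inl i) (Sum.inr j))).card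
            ≤ (Finset.univ.filter (fun i : Fin m =>
              G.Adj (Sum.inl i) (Sum.inr j))).card := by
              apply Finset.card_le_card
              intro i hi
              simp only [Finset.mem_filter] at *
              exact ⟨hi.1, hi.2.2⟩
          _ = d j := degB j
          _ = e := htail j (le_of_not_gt hj)
    calc (∑ j : Fin m, ∑ i : Fin m,
          if ((i:ℕ) < s ∧ G.Adj (Sum.inl i) (Sum.inr j)) then 1 else 0)
        ≤ ∑ j : Fin m, if (j:ℕ) < s then s else e :=
          Finset.sum_le_sum (fun j _ => hcol j)
      _ = s * s + (m - s) * e := by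
          rw [Finset.sum_ite, Finset.sum_const, Finset.sum_const, hcards,
            Finset.filter_not, Finset.card_sdiff_of_subset (Finset.filter_subset _ _),
            hcards, smul_eq_mul, smul_eq_mul, Finset.card_univ, Fintype.card_fin]
  -- combine
  have hkey : s * d1 ≤ s * s + (m - s) * e := h1 ▸ h2
  have hkeyR : (s:ℝ) * d1 ≤ (s:ℝ) * s + ((m:ℝ) - s) * e := by
    have := (Nat.cast_le (α := ℝ)).mpr hkey
    push_cast [Nat.cast_sub hsm'.le] at this
    convert this using 2 <;> push_cast <;> ring_nf
  have hb' : 4 * a * m < (d1:ℝ) * (a + 1) ^ 2 := by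
    rw [div_lt_iff₀ (by positivity)] at hbig
    linarith
  have hsR : (0:ℝ) < s := Nat.cast_pos.mpr hs
  nlinarith [mul_lt_mul_of_pos_left hb' hsR,
    mul_le_mul_of_nonneg_right hkeyR (sq_nonneg (a + 1)),
    hsm, hem, mul_le_mul_of_nonneg_left hsm.le (le_of_lt hsR),
    mul_self_nonneg ((s:ℝ) * (a+1) - 2 * m)]
end

section
/- For every positive integer k divisible by 5 and every even non-negative integer r with r ≤ 2k/5, there exists a simple graph on k vertices that is triangle-free and r-regular. -/
/-- For every positive integer `k` divisible by `5` and every even `r ≤ 2k/5`, there exists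
a triangle-free `r`-regular simple graph on `k` vertices. -/
theorem exists_triangle_free_regular_gadget (k r : ℕ) (hk : 0 < k) (hk5 : 5 ∣ k)
    (hr : Even r) (hrk : r ≤ 2 * k / 5) :
    ∃ (G : SimpleGraph (Fin k)) (_ : DecidableRel G.Adj),
      G.CliqueFree 3 ∧ G.IsRegularOfDegree r := by
  obtain ⟨m, rfl⟩ := hk5
  obtain ⟨n, rfl⟩ := hr
  have hm : 0 < m := by omega
  have hn : n ≤ m := by omega
  haveI : NeZero m := ⟨hm.ne'⟩
  have hcard : Fintype.card (ZMod 5 × ZMod m) = 5 * m := by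
    simp [ZMod.card]
  let e : Fin (5 * m) ≃ (ZMod 5 × ZMod m) := (Fintype.equivFinOfCardEq hcard).symm
  let G : SimpleGraph (Fin (5 * m)) :=
    { Adj := fun x y =>
        ((e y).1 = (e x).1 + 1 ∧ ((e y).2 - (e x).2).val < n) ∨
        ((e x).1 = (e y).1 + 1 ∧ ((e x).2 - (e y).2).val < n)
      symm := by constructor; intro a b h; tauto
      loopless := by
        constructor; intro a h
        rcases h with ⟨h, -⟩ | ⟨h, -⟩ <;>
          exact absurd (left_eq_add.mp h) (by decide) }
  have hdec : DecidableRel G.Adj := fun x y =>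
    inferInstanceAs (Decidable ((_ = _ ∧ _ < n) ∨ (_ = _ ∧ _ < n)))
  refine ⟨G, hdec, ?_, ?_⟩
  · -- triangle-free
    intro t ht
    obtain ⟨a, b, c, hab, hac, hbc, -⟩ := SimpleGraph.is3Clique_iff.mp ht
    have key : ∀ i j l : ZMod 5, (j = i + 1 ∨ i = j + 1) → (l = i + 1 ∨ i = l + 1) →
        (l = j + 1 ∨ j = l + 1) → False := by decide
    exact key (e a).1 (e b).1 (e c).1 (hab.imp And.left And.left)
      (hac.imp And.left And.left) (hbc.imp And.left And.left)
  · -- regular of degree n + n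
    intro x
    classical
    set a := e x with ha
    have hdeg : G.degree x = (Finset.univ.filter (G.Adj x)).card := by
      rw [SimpleGraph.degree]
      congr 1
      ext y
      simp [SimpleGraph.neighborFinset, SimpleGraph.neighborSet]; exact Set.mem_toFinset
    rw [hdeg]
    have hbij : (Finset.univ.filter (G.Adj x)).card =
        (Finset.univ.filter (fun b : ZMod 5 × ZMod m =>
          (b.1 = a.1 + 1 ∧ (b.2 - a.2).val < n) ∨
          (a.1 = b.1 + 1 ∧ (a.2 - b.2).val < n))).card := by
      apply Finset.card_equiv e
      intro y
      simp only [Finset.mem_filter, Finset.mem_univ, true_and]; exact Iff.rfl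
    rw [hbij]
    rw [Finset.filter_or, Finset.card_union_of_disjoint]
    · have h1 : (Finset.univ.filter (fun b : ZMod 5 × ZMod m =>
          b.1 = a.1 + 1 ∧ (b.2 - a.2).val < n)).card = (Finset.range n).card := by
        apply Finset.card_nbij' (i := fun b => (b.2 - a.2).val)
          (j := fun i => (a.1 + 1, a.2 + (i : ZMod m)))
        · intro b hb
          simp only [Finset.mem_coe, Finset.mem_filter] at hb
          simpa using hb.2.2
        · intro i hi
          simp only [Finset.mem_coe, Finset.mem_range] at hi
          simp only [Finset.mem_coe, Finset.mem_filter, Finset.mem_univ, true_and]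
          rw [add_sub_cancel_left, ZMod.val_cast_of_lt (lt_of_lt_of_le hi hn)]
          exact hi
        · intro b hb
          simp only [Finset.mem_coe, Finset.mem_filter] at hb
          have : (((b.2 - a.2).val : ZMod m)) = b.2 - a.2 := by
            rw [ZMod.natCast_val, ZMod.cast_id]
          ext
          · exact hb.2.1.symm
          · simp [this]
        · intro i hi
          simp only [Finset.mem_coe, Finset.mem_range] at hi
          simp [ZMod.val_cast_of_lt (lt_of_lt_of_le hi hn)]
      have h2 : (Finset.univ.filter (fun b : ZMod 5 × ZMod m =>
          a.1 = b.1 + 1 ∧ (a.2 - b.2).val < n)).card = (Finset.range n).card := by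
        apply Finset.card_nbij' (i := fun b => (a.2 - b.2).val)
          (j := fun i => (a.1 - 1, a.2 - (i : ZMod m)))
        · intro b hb
          simp only [Finset.mem_coe, Finset.mem_filter] at hb
          simpa using hb.2.2
        · intro i hi
          simp only [Finset.mem_coe, Finset.mem_range] at hi
          simp only [Finset.mem_coe, Finset.mem_filter, Finset.mem_univ, true_and]
          constructor
          · rw [sub_add_cancel]
          · rw [sub_sub_cancel, ZMod.val_cast_of_lt (lt_of_lt_of_le hi hn)]
            exact hi
        · intro b hb
          simp only [Finset.mem_coe, Finset.mem_filter] at hb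
          have : (((a.2 - b.2).val : ZMod m)) = a.2 - b.2 := by
            rw [ZMod.natCast_val, ZMod.cast_id]
          ext
          · rw [hb.2.1]; ring
          · simp [this]
        · intro i hi
          simp only [Finset.mem_coe, Finset.mem_range] at hi
          simp [ZMod.val_cast_of_lt (lt_of_lt_of_le hi hn)]
      rw [h1, h2, Finset.card_range]
    · rw [Finset.disjoint_left]
      intro b hb1 hb2
      simp only [Finset.mem_filter] at hb1 hb2
      have h3 : a.1 = a.1 + 1 + 1 := by
        rw [← hb1.2.1]; exact hb2.2.1
      rw [add_assoc] at h3
      exact absurd (left_eq_add.mp h3) (by decide)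
end
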